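/- Let f(z) = Σ_{n≥1} a_n z^n be analytic on the unit disk with |f(z)| ≤ 1 and f(0) = 0 (a Schwarz function). Then for all r with 0 ≤ r ≤ 1 − √(2/3), the inequality Σ_{n≥0} (n+1)|a_{n+1}| r^n ≤ 1 holds, i.e., the majorant series of f' at r is at most 1. -/

import Mathlib

open Metric Set Filter FormalMultilinearSeries Complex
set_option maxHeartbeats 1600000

noncomputable def BSps (b : ℕ → ℂ) : FormalMultilinearSeries ℂ ℂ ℂ :=
  FormalMultilinearSeries.ofScalars ℂ b

lemma BSps_apply (b : ℕ → ℂ) (n : ℕ) (z : ℂ) :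
    BSps b n (fun _ => z) = b n * z ^ n := by
  rw [BSps, FormalMultilinearSeries.ofScalars_apply_eq, smul_eq_mul]

lemma BSps_norm (b : ℕ → ℂ) (n : ℕ) : ‖BSps b n‖ = ‖b n‖ :=
  FormalMultilinearSeries.ofScalars_norm ℂ b n

lemma BSps_coeff (b : ℕ → ℂ) (n : ℕ) : (BSps b).coeff n = b n := by
  have h : (BSps b).coeff n = BSps b n (fun _ => 1) := rfl
  rw [h, BSps_apply, one_pow, mul_one]

lemma BS_hasFPS (g : ℂ → ℂ) (b : ℕ → ℂ)
    (hg : ∀ z : ℂ, ‖z‖ < 1 → HasSum (fun n : ℕ => b n * z ^ n) (g z)) :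
    HasFPowerSeriesOnBall g (BSps b) 0 1 := by
  refine ⟨?_, one_pos, ?_⟩
  · refine ENNReal.le_of_forall_nnreal_lt fun s hs => ?_
    rw [ENNReal.coe_lt_one_iff] at hs
    have hs' : ‖(s : ℂ)‖ < 1 := by
      simpa [Complex.norm_real] using (show (s:ℝ) < 1 from hs)
    have h0 := (hg s hs').summable.tendsto_atTop_zero
    refine (BSps b).le_radius_of_tendsto (l := 0) ?_
    have h1 : Tendsto (fun n => ‖b n * (s:ℂ) ^ n‖) atTop (nhds 0) := by
      simpa using h0.norm
    refine h1.congr fun n => ?_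
    rw [norm_mul, norm_pow, BSps_norm]
    norm_num [Complex.norm_real]
  · intro y hy
    rw [EMetric.mem_ball, edist_zero_right] at hy
    have hy' : ‖y‖ < 1 := by rw [← ENNReal.coe_one, enorm_lt_coe] at hy; exact_mod_cast hy
    rw [zero_add]
    simp_rw [BSps_apply]
    exact hg y hy'

lemma BS_val0 (g : ℂ → ℂ) (b : ℕ → ℂ)
    (hg : ∀ z : ℂ, ‖z‖ < 1 → HasSum (fun n : ℕ => b n * z ^ n) (g z)) :
    g 0 = b 0 := by
  refine (hg 0 (by norm_num)).unique ?_
  have := hasSum_single (f := fun n : ℕ => b n * (0:ℂ) ^ n) 0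
    (fun n hn => by simp [zero_pow hn])
  simpa using this

lemma BS_diffOn (g : ℂ → ℂ) (b : ℕ → ℂ)
    (hg : ∀ z : ℂ, ‖z‖ < 1 → HasSum (fun n : ℕ => b n * z ^ n) (g z)) :
    DifferentiableOn ℂ g (ball (0:ℂ) 1) := by
  have h := (BS_hasFPS g b hg).analyticOnNhd
  have : Metric.eball (0:ℂ) 1 = ball (0:ℂ) 1 := by
    ext z
    rw [Metric.mem_eball, mem_ball_zero_iff, edist_zero_right, ← ENNReal.coe_one,
      enorm_lt_coe, ← NNReal.coe_lt_coe, coe_nnnorm, NNReal.coe_one]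
  rw [this] at h
  exact h.differentiableOn

lemma BS_deriv0 (g : ℂ → ℂ) (b : ℕ → ℂ)
    (hg : ∀ z : ℂ, ‖z‖ < 1 → HasSum (fun n : ℕ => b n * z ^ n) (g z)) :
    deriv g 0 = b 1 := by
  rw [(BS_hasFPS g b hg).hasFPowerSeriesAt.deriv]
  exact (BSps_apply b 1 1).trans (by ring)

-- möbius inequality
lemma moebius_ineq (u c : ℂ) (hu : ‖u‖ ≤ 1) (hc : ‖c‖ ≤ 1) :
    ‖u - c‖ ≤ ‖1 - (starRingEnd ℂ) c * u‖ := by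
  have key : ‖1 - (starRingEnd ℂ) c * u‖^2 - ‖u - c‖^2
      = (1 - ‖u‖^2) * (1 - ‖c‖^2) := by
    simp only [Complex.sq_norm, Complex.normSq_apply, Complex.sub_re,
      Complex.sub_im, Complex.one_re, Complex.one_im, Complex.mul_re, Complex.mul_im,
      Complex.conj_re, Complex.conj_im]
    ring
  have h1 : (0:ℝ) ≤ 1 - ‖u‖^2 := by nlinarith [norm_nonneg u]
  have h2 : (0:ℝ) ≤ 1 - ‖c‖^2 := by nlinarith [norm_nonneg c]
  nlinarith [key, h1, h2, norm_nonneg (u - c), norm_nonneg (1 - (starRingEnd ℂ) c * u)]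

lemma BS_SP_core (H : ℂ → ℂ) (c : ℕ → ℂ)
    (hH : ∀ z : ℂ, ‖z‖ < 1 → HasSum (fun n : ℕ => c n * z ^ n) (H z))
    (hb : ∀ z : ℂ, ‖z‖ < 1 → ‖H z‖ ≤ 1)
    (hc0 : ‖c 0‖ < 1) :
    ‖c 1‖ ≤ 1 - ‖c 0‖ ^ 2 := by
  have hdiff := BS_diffOn H c hH
  have hH0 : H 0 = c 0 := BS_val0 H c hH
  set D : ℂ → ℂ := fun z => 1 - (starRingEnd ℂ) (c 0) * H z with hD
  have hDne : ∀ z ∈ ball (0:ℂ) 1, D z ≠ 0 := by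
    intro z hz
    rw [mem_ball_zero_iff] at hz
    have : ‖(starRingEnd ℂ) (c 0) * H z‖ < 1 := by
      rw [norm_mul, RCLike.norm_conj]
      calc ‖c 0‖ * ‖H z‖ ≤ ‖c 0‖ * 1 := by
            exact mul_le_mul_of_nonneg_left (hb z hz) (norm_nonneg _)
        _ < 1 := by simpa using hc0
    intro h
    rw [sub_eq_zero] at h
    rw [← h] at this
    simp at this
  set w : ℂ → ℂ := fun z => (H z - c 0) / D z with hw
  have hwdiff : DifferentiableOn ℂ w (ball (0:ℂ) 1) := by
    apply DifferentiableOn.div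
    · exact hdiff.sub_const _
    · exact (differentiableOn_const _).sub ((differentiableOn_const _).mul hdiff)
    · exact hDne
  have hw0 : w 0 = 0 := by simp [hw, hH0]
  have hwle : ∀ z ∈ ball (0:ℂ) 1, ‖w z‖ ≤ 1 := by
    intro z hz
    rw [mem_ball_zero_iff] at hz
    have h1 := moebius_ineq (H z) (c 0) (hb z hz) hc0.le
    rw [hw]
    simp only []
    rw [norm_div]
    rw [div_le_one (norm_pos_iff.mpr (hDne z (mem_ball_zero_iff.mpr hz)))]
    exact h1
  -- Schwarz lemma
  have hderiv_le : ‖deriv w 0‖ ≤ 1 := by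
    refine le_of_forall_pos_le_add fun ε hε => ?_
    have maps : MapsTo w (ball (0:ℂ) 1) (ball (w 0) (1 + ε)) := by
      intro z hz
      rw [hw0, mem_ball_zero_iff]
      exact lt_of_le_of_lt (hwle z hz) (by linarith)
    have := Complex.norm_deriv_le_div_of_mapsTo_ball hwdiff (maps.mono_right ball_subset_closedBall) one_pos
    simpa using this
  -- compute deriv w 0
  have hD0 : D 0 = ((1 - ‖c 0‖^2 : ℝ) : ℂ) := by
    rw [hD]
    simp only [hH0]
    rw [← Complex.normSq_eq_conj_mul_self]
    rw [← Complex.sq_norm]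
    push_cast
    ring_nf
  have hpos : (0:ℝ) < 1 - ‖c 0‖^2 := by nlinarith [norm_nonneg (c 0)]
  have hD0ne : D 0 ≠ 0 := hDne 0 (by simp)
  have hHd : HasDerivAt H (c 1) 0 := by
    have h1 : DifferentiableAt ℂ H 0 :=
      hdiff.differentiableAt (isOpen_ball.mem_nhds (mem_ball_self one_pos))
    have := h1.hasDerivAt
    rwa [BS_deriv0 H c hH] at this
  have hu : HasDerivAt (fun z => H z - c 0) (c 1) 0 := hHd.sub_const _
  have hv : HasDerivAt D (-((starRingEnd ℂ) (c 0) * c 1)) 0 := by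
    have := (hHd.const_mul ((starRingEnd ℂ) (c 0))).const_sub 1
    exact this
  have hdw : HasDerivAt w ((c 1 * D 0 - (H 0 - c 0) * (-((starRingEnd ℂ) (c 0) * c 1))) / D 0 ^ 2)
      0 := hu.div hv hD0ne
  have hval : deriv w 0 = c 1 / D 0 := by
    rw [hdw.deriv, hH0]
    field_simp
    ring
  rw [hval, norm_div, hD0] at hderiv_le
  rw [Complex.norm_real, Real.norm_eq_abs, abs_of_pos hpos, div_le_one hpos] at hderiv_le
  exact hderiv_le

lemma BS_SP (H : ℂ → ℂ) (c : ℕ → ℂ)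
    (hH : ∀ z : ℂ, ‖z‖ < 1 → HasSum (fun n : ℕ => c n * z ^ n) (H z))
    (hb : ∀ z : ℂ, ‖z‖ < 1 → ‖H z‖ ≤ 1) :
    ‖c 1‖ ≤ 1 - ‖c 0‖ ^ 2 := by
  have hc0 : ‖c 0‖ ≤ 1 := by
    rw [← BS_val0 H c hH]; exact hb 0 (by norm_num)
  have key : ∀ s : ℝ, 0 < s → s < 1 → s * ‖c 1‖ ≤ 1 - s^2 * ‖c 0‖^2 := by
    intro s hs0 hs1
    have := BS_SP_core (fun z => (s:ℂ) * H z) (fun n => (s:ℂ) * c n)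
      (fun z hz => by simpa [mul_assoc] using (hH z hz).mul_left (s:ℂ))
      (fun z hz => by
        rw [norm_mul, Complex.norm_real, Real.norm_eq_abs, abs_of_pos hs0]
        have : s * ‖H z‖ ≤ s * 1 := mul_le_mul_of_nonneg_left (hb z hz) hs0.le
        linarith)
      (by
        rw [norm_mul, Complex.norm_real, Real.norm_eq_abs, abs_of_pos hs0]
        calc s * ‖c 0‖ ≤ s * 1 := mul_le_mul_of_nonneg_left hc0 hs0.le
          _ < 1 := by linarith)
    rw [norm_mul, norm_mul, Complex.norm_real, Real.norm_eq_abs, abs_of_pos hs0, mul_pow] at this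
    nlinarith [this]
  have hlim : Tendsto (fun s : ℝ => 1 - s^2 * ‖c 0‖^2 - s * ‖c 1‖) (nhdsWithin 1 (Set.Iio 1))
      (nhds (1 - ‖c 0‖^2 - ‖c 1‖)) := by
    have : ContinuousAt (fun s : ℝ => 1 - s^2 * ‖c 0‖^2 - s * ‖c 1‖) 1 := by fun_prop
    simpa using this.continuousWithinAt.tendsto
  have hev : ∀ᶠ s in nhdsWithin (1:ℝ) (Set.Iio 1), 0 ≤ 1 - s^2 * ‖c 0‖^2 - s * ‖c 1‖ := by
    filter_upwards [Ioo_mem_nhdsLT_of_mem (show (1:ℝ) ∈ Set.Ioc 0 1 by norm_num)] with s hs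
    have := key s hs.1 hs.2
    linarith
  have := ge_of_tendsto hlim hev
  linarith [this]

lemma BS_wiener (g : ℂ → ℂ) (b : ℕ → ℂ)
    (hg : ∀ z : ℂ, ‖z‖ < 1 → HasSum (fun m : ℕ => b m * z ^ m) (g z))
    (hbd : ∀ z : ℂ, ‖z‖ < 1 → ‖g z‖ ≤ 1)
    (n : ℕ) (hn : 1 ≤ n) :
    ‖b n‖ ≤ 1 - ‖b 0‖ ^ 2 := by
  have hn0 : n ≠ 0 := Nat.one_le_iff_ne_zero.mp hn
  have hnpos : (0:ℝ) < n := by exact_mod_cast Nat.pos_of_ne_zero hn0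
  set ω : ℂ := Complex.exp (2 * Real.pi * Complex.I / n) with hω
  have hprim : IsPrimitiveRoot ω n := Complex.isPrimitiveRoot_exp n hn0
  have hωn : ω ^ n = 1 := hprim.pow_eq_one
  have hωabs : ‖ω‖ = 1 := by
    have h1 : ‖ω‖ ^ n = 1 := by rw [← norm_pow, hωn, norm_one]
    rcases lt_trichotomy ‖ω‖ 1 with h | h | h
    · have := pow_lt_one₀ (norm_nonneg ω) h hn0
      rw [h1] at this; exact absurd this (lt_irrefl 1)
    · exact h
    · have := one_lt_pow₀ h hn0
      rw [h1] at this; exact absurd this (lt_irrefl 1)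
  set c : ℕ → ℂ := fun k => b (n * k) with hc
  have hroot : ∀ w : ℂ, ‖w‖ < 1 → ∃ z : ℂ, z ^ n = w ∧ ‖z‖ < 1 := by
    intro w hw
    rcases eq_or_ne w 0 with rfl | hw0
    · exact ⟨0, by simp [zero_pow hn0], by norm_num⟩
    · refine ⟨w ^ ((n : ℂ)⁻¹), Complex.cpow_nat_inv_pow w hn0, ?_⟩
      rw [Complex.norm_cpow_inv_nat]
      exact Real.rpow_lt_one (norm_nonneg w) hw (inv_pos.mpr hnpos)
  have key : ∀ w : ℂ, ‖w‖ < 1 → ∃ S : ℂ, HasSum (fun k : ℕ => c k * w ^ k) S ∧ ‖S‖ ≤ 1 := by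
    intro w hw
    obtain ⟨z, hzn, hz⟩ := hroot w hw
    have hrot : ∀ j : ℕ, ‖ω ^ j * z‖ < 1 := by
      intro j
      rw [norm_mul, norm_pow, hωabs, one_pow, one_mul]
      exact hz
    have hsum1 : HasSum (fun m : ℕ => ∑ j ∈ Finset.range n, b m * (ω ^ j * z) ^ m)
        (∑ j ∈ Finset.range n, g (ω ^ j * z)) :=
      hasSum_sum fun j _ => hg (ω ^ j * z) (hrot j)
    have hsum2 : HasSum (fun m : ℕ => if n ∣ m then (n : ℂ) * (b m * z ^ m) else 0)
        (∑ j ∈ Finset.range n, g (ω ^ j * z)) := by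
      refine hsum1.congr_fun fun m => ?_
      have hpow : ∀ j : ℕ, b m * (ω ^ j * z) ^ m = b m * z ^ m * (ω ^ m) ^ j := by
        intro j
        rw [mul_pow, ← pow_mul, mul_comm j m, pow_mul]
        ring
      rw [Finset.sum_congr rfl fun j _ => hpow j, ← Finset.mul_sum]
      rcases Classical.em (n ∣ m) with h | h
      · have hζ : ω ^ m = 1 := (hprim.pow_eq_one_iff_dvd m).mpr h
        rw [hζ, if_pos h]
        simp only [one_pow, Finset.sum_const, Finset.card_range, nsmul_eq_mul, mul_one]
        ring
      · have hζ : ω ^ m ≠ 1 := fun habs => h ((hprim.pow_eq_one_iff_dvd m).mp habs)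
        rw [geom_sum_eq hζ, ← pow_mul, mul_comm m n, pow_mul, hωn, one_pow, if_neg h]
        simp
    have hinj : Function.Injective (fun k : ℕ => n * k) := fun x y h =>
      Nat.eq_of_mul_eq_mul_left (Nat.pos_of_ne_zero hn0) h
    have hzero : ∀ m : ℕ, m ∉ Set.range (fun k : ℕ => n * k) →
        (if n ∣ m then (n : ℂ) * (b m * z ^ m) else 0) = 0 := by
      intro m hm
      rw [if_neg]
      intro ⟨k, hk⟩
      exact hm ⟨k, hk.symm⟩
    have hsum3 := (hinj.hasSum_iff hzero).mpr hsum2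
    have hsum4 : HasSum (fun k : ℕ => (n : ℂ) * (c k * w ^ k))
        (∑ j ∈ Finset.range n, g (ω ^ j * z)) := by
      refine hsum3.congr_fun fun k => ?_
      simp only [Function.comp_apply]
      rw [if_pos ⟨k, rfl⟩, ← hzn, ← pow_mul]
    have hne : (n : ℂ) ≠ 0 := Nat.cast_ne_zero.mpr hn0
    refine ⟨(∑ j ∈ Finset.range n, g (ω ^ j * z)) / n, ?_, ?_⟩
    · refine (hsum4.div_const (n : ℂ)).congr_fun fun k => ?_
      field_simp
    · rw [norm_div, Complex.norm_natCast, div_le_one hnpos]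
      calc ‖∑ j ∈ Finset.range n, g (ω ^ j * z)‖
          ≤ ∑ j ∈ Finset.range n, ‖g (ω ^ j * z)‖ := norm_sum_le _ _
        _ ≤ ∑ _j ∈ Finset.range n, (1:ℝ) :=
            Finset.sum_le_sum fun j _ => hbd _ (hrot j)
        _ = n := by simp
  set H : ℂ → ℂ := fun w => ∑' k, c k * w ^ k with hHdef
  have hH : ∀ w : ℂ, ‖w‖ < 1 → HasSum (fun k : ℕ => c k * w ^ k) (H w) ∧ ‖H w‖ ≤ 1 := by
    intro w hw
    obtain ⟨S, h1, h2⟩ := key w hw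
    have hv : H w = S := h1.tsum_eq
    rw [hv]
    exact ⟨h1, h2⟩
  have := BS_SP H c (fun z hz => (hH z hz).1) (fun z hz => (hH z hz).2)
  simpa [hc] using this

lemma BS_numeric (a : ℕ → ℂ) (t r : ℝ) (ht0 : 0 ≤ t) (ht1 : t ≤ 1)
    (hta : ‖a 1‖ = t)
    (hW : ∀ n : ℕ, 1 ≤ n → ‖a (n + 1)‖ ≤ 1 - t ^ 2)
    (hr0 : 0 ≤ r) (hr : r ≤ 1 - Real.sqrt (2 / 3)) :
    ∑' n : ℕ, ((n : ℝ) + 1) * ‖a (n + 1)‖ * r ^ n ≤ 1 := by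
  have hs23 : Real.sqrt (2/3) ^ 2 = 2/3 := Real.sq_sqrt (by norm_num)
  have hspos : 0 < Real.sqrt (2/3) := Real.sqrt_pos.mpr (by norm_num)
  have hr1 : r < 1 := by nlinarith
  have hrn : ‖r‖ < 1 := by rw [Real.norm_eq_abs, _root_.abs_of_nonneg hr0]; exact hr1
  have ht2 : (0:ℝ) ≤ 1 - t ^ 2 := by nlinarith
  have hble1 : ∀ n : ℕ, ‖a (n + 1)‖ ≤ 1 := by
    intro n
    rcases Nat.eq_zero_or_pos n with rfl | hn
    · rw [hta]; exact ht1
    · have h1 : 1 ≤ n := hn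
      have := hW n h1
      nlinarith
  have hvsum : Summable (fun n : ℕ => ((n : ℝ) + 1) * r ^ n) := by
    have h1 := summable_pow_mul_geometric_of_norm_lt_one (R := ℝ) 1 hrn
    have h2 := summable_geometric_of_lt_one hr0 hr1
    refine (h1.add h2).congr fun n => ?_
    push_cast
    ring
  have husum : Summable (fun n : ℕ => ((n : ℝ) + 1) * ‖a (n + 1)‖ * r ^ n) := by
    refine Summable.of_nonneg_of_le (fun n => by positivity) (fun n => ?_) hvsum
    have hrp : (0:ℝ) ≤ r ^ n := by positivity
    have hnn : (0:ℝ) ≤ (n:ℝ) + 1 := by positivity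
    calc ((n : ℝ) + 1) * ‖a (n + 1)‖ * r ^ n ≤ ((n : ℝ) + 1) * 1 * r ^ n :=
          mul_le_mul_of_nonneg_right (mul_le_mul_of_nonneg_left (hble1 n) hnn) hrp
      _ = ((n : ℝ) + 1) * r ^ n := by ring
  rw [Summable.tsum_eq_zero_add husum]
  have htail : ∑' n : ℕ, (((n+1 : ℕ) : ℝ) + 1) * ‖a ((n+1) + 1)‖ * r ^ (n+1)
      ≤ (1 - t^2) * ∑' n : ℕ, (((n:ℝ) + 2) * r ^ (n+1)) := by
    rw [← tsum_mul_left]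
    refine Summable.tsum_le_tsum (fun n => ?_) ((summable_nat_add_iff 1).mpr husum) ?_
    · have hw := hW (n+1) (by omega)
      have hrp : (0:ℝ) ≤ r ^ (n+1) := by positivity
      have h2 : (((n+1:ℕ):ℝ) + 1) = (n:ℝ) + 2 := by push_cast; ring
      rw [h2]
      have hnn : (0:ℝ) ≤ (n:ℝ) + 2 := by positivity
      calc ((n:ℝ) + 2) * ‖a (n + 1 + 1)‖ * r ^ (n+1)
          ≤ ((n:ℝ) + 2) * (1 - t^2) * r ^ (n+1) :=
            mul_le_mul_of_nonneg_right (mul_le_mul_of_nonneg_left hw hnn) hrp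
        _ = (1 - t^2) * (((n:ℝ) + 2) * r ^ (n+1)) := by ring
    · apply Summable.mul_left
      refine ((summable_nat_add_iff 1).mpr hvsum).congr fun n => ?_
      push_cast
      ring
  have hA : ∑' n : ℕ, ((n:ℝ) + 1) * r ^ n = r / (1-r)^2 + (1-r)⁻¹ := by
    rw [← tsum_coe_mul_geometric_of_norm_lt_one hrn, ← tsum_geometric_of_lt_one hr0 hr1,
      ← Summable.tsum_add ((summable_pow_mul_geometric_of_norm_lt_one 1 hrn).congr
        (fun n => by push_cast; ring)) (summable_geometric_of_lt_one hr0 hr1)]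
    refine tsum_congr fun n => ?_
    push_cast
    ring
  have hT : ∑' n : ℕ, (((n:ℝ) + 2) * r ^ (n+1)) = r / (1-r)^2 + (1-r)⁻¹ - 1 := by
    have hsplit := Summable.tsum_eq_zero_add hvsum
    rw [hA] at hsplit
    have h0 : (((0:ℕ):ℝ) + 1) * r ^ (0:ℕ) = 1 := by norm_num
    rw [h0] at hsplit
    have heq : ∑' n : ℕ, (((n+1:ℕ):ℝ) + 1) * r ^ (n+1) = ∑' n : ℕ, (((n:ℝ) + 2) * r ^ (n+1)) := by
      refine tsum_congr fun n => ?_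
      push_cast
      ring
    rw [heq] at hsplit
    linarith
  rw [hT] at htail
  have hx : (0:ℝ) < 1 - r := by linarith
  have hx2 : (1-r)^2 ≥ 2/3 := by nlinarith [Real.sqrt_nonneg (2/3)]
  have hxle : 1 - r ≤ 1 := by linarith
  have hSeq : r / (1-r)^2 + (1-r)⁻¹ - 1 = (1 - (1-r)^2)/(1-r)^2 := by
    field_simp
    ring
  rw [hSeq] at htail
  have hS12 : (1 - (1-r)^2)/(1-r)^2 ≤ 1/2 := by
    rw [div_le_iff₀ (by positivity)]
    nlinarith
  have hS0 : 0 ≤ (1 - (1-r)^2)/(1-r)^2 := by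
    apply div_nonneg
    · nlinarith
    · positivity
  have hhead : (((0:ℕ):ℝ) + 1) * ‖a (0+1)‖ * r ^ (0:ℕ) = t := by
    norm_num [hta]
  calc (((0:ℕ):ℝ) + 1) * ‖a (0+1)‖ * r ^ (0:ℕ)
        + ∑' n : ℕ, (((n+1:ℕ):ℝ) + 1) * ‖a ((n+1) + 1)‖ * r ^ (n+1)
      ≤ t + (1 - t^2) * ((1 - (1-r)^2)/(1-r)^2) := by
        rw [hhead]
        exact add_le_add_right htail t
    _ ≤ 1 := by
        nlinarith [mul_le_mul_of_nonneg_left hS12 ht2, mul_nonneg ht2 hS0, sq_nonneg (1-t)]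


/-- Bohr inequality for the derivative of a Schwarz function (Bhowmik–Das): if
`f = Σ_{n≥1} aₙ zⁿ` is analytic on the unit disk with `|f| ≤ 1` and `f(0) = 0`,
then `Σ_{n≥0} (n+1)|a_{n+1}| rⁿ ≤ 1` for `0 ≤ r ≤ 1 − √(2/3)`. -/
theorem bohr_schwarz_derivative (f : ℂ → ℂ) (a : ℕ → ℂ)
    (hf : ∀ z : ℂ, ‖z‖ < 1 → HasSum (fun n : ℕ => a n * z ^ n) (f z))
    (hb : ∀ z : ℂ, ‖z‖ < 1 → ‖f z‖ ≤ 1)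
    (ha0 : a 0 = 0) (hf0 : f 0 = 0)
    (r : ℝ) (hr0 : 0 ≤ r) (hr : r ≤ 1 - Real.sqrt (2 / 3)) :
    ∑' n : ℕ, ((n : ℝ) + 1) * ‖a (n + 1)‖ * r ^ n ≤ 1 := by
  have hgsum : ∀ z : ℂ, ‖z‖ < 1 →
      HasSum (fun n : ℕ => a (n + 1) * z ^ n) (dslope f 0 z) := by
    intro z hz
    rcases eq_or_ne z 0 with rfl | hz0
    · have hg0 : dslope f 0 0 = a 1 := by
        rw [dslope_same, BS_deriv0 f a hf]
      rw [hg0]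
      have := hasSum_single (f := fun n : ℕ => a (n + 1) * (0:ℂ) ^ n) 0
        (fun n hn => by simp [zero_pow hn])
      simpa using this
    · have hshift : HasSum (fun n : ℕ => a (n + 1) * z ^ (n + 1))
          (f z - ∑ i ∈ Finset.range 1, a i * z ^ i) :=
        (hasSum_nat_add_iff' 1).mpr (hf z hz)
      have h2 : HasSum (fun n : ℕ => a (n + 1) * z ^ (n + 1)) (f z) := by
        simpa [ha0] using hshift
      have h3 := h2.mul_left z⁻¹
      have hgz : dslope f 0 z = z⁻¹ * f z := by
        rw [dslope_of_ne f hz0, slope_def_field, div_eq_inv_mul]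
        simp [hf0]
      rw [hgz]
      refine h3.congr_fun fun n => ?_
      rw [pow_succ]
      field_simp
  have hgbd : ∀ z : ℂ, ‖z‖ < 1 → ‖dslope f 0 z‖ ≤ 1 := by
    intro z hz
    refine le_of_forall_pos_le_add fun ε hε => ?_
    have maps : Set.MapsTo f (ball (0:ℂ) 1) (ball (f 0) (1 + ε)) := by
      intro y hy
      rw [hf0, mem_ball_zero_iff]
      exact lt_of_le_of_lt (hb y (mem_ball_zero_iff.mp hy)) (by linarith)
    have := Complex.norm_dslope_le_div_of_mapsTo_ball (BS_diffOn f a hf) (maps.mono_right ball_subset_closedBall)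
      (mem_ball_zero_iff.mpr hz)
    simpa using this
  have hval : dslope f 0 0 = a 1 := BS_val0 (dslope f 0) (fun n => a (n + 1)) hgsum
  have ht1 : ‖a 1‖ ≤ 1 := by
    rw [← hval]
    exact hgbd 0 (by norm_num)
  have hW : ∀ n : ℕ, 1 ≤ n → ‖a (n + 1)‖ ≤ 1 - ‖a 1‖ ^ 2 := by
    intro n hn
    exact BS_wiener (dslope f 0) (fun n => a (n + 1)) hgsum hgbd n hn
  exact BS_numeric a (‖a 1‖) r (norm_nonneg _) ht1 rfl hW hr0 hr
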